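/- arXiv:1401.6574 — 2 statements merged into one kernel-verified Lean document; each statement's English description precedes it below -/
import Mathlib

section
/- (Joyal) In a cartesian closed category with an initial object 0 in which negation is involutive—i.e. the canonical morphism A → (A ⇒ 0) ⇒ 0 is an isomorphism for every object A—there is at most one morphism between any two objects; hence the category is a preorder. -/
open CategoryTheory CategoryTheory.Limits MonoidalCategory CartesianClosed

variable {C : Type*} [Category C] [CartesianMonoidalCategory C] [MonoidalClosed C] [HasInitial C]

attribute [local instance] BraidedCategory.ofCartesianMonoidalCategory

/-- The canonical double-negation morphism `A ⟶ ((A ⇒ 0) ⇒ 0)` in a cartesian closed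
category with initial object `0`, where `¬A := A ⇒ 0`. -/
noncomputable def doubleNegUnit (A : C) : A ⟶ ((A ⟹ ⊥_ C) ⟹ ⊥_ C) :=
  MonoidalClosed.curry ((β_ (A ⟹ ⊥_ C) A).hom ≫ (ihom.ev A).app (⊥_ C))

/-- (Joyal) In a cartesian closed category with an initial object `0` in which negation is
involutive — i.e. the canonical morphism `A ⟶ (A ⇒ 0) ⇒ 0` is an isomorphism for every
object `A` — there is at most one morphism between any two objects; hence the category is
a preorder. -/
theorem joyal_preorder (h : ∀ A : C, IsIso (doubleNegUnit A)) (A B : C) :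
    Subsingleton (A ⟶ B) := by
  constructor
  intro f g
  haveI := h B
  have hcancel : f ≫ doubleNegUnit B = g ≫ doubleNegUnit B := by
    apply MonoidalClosed.uncurry_injective
    set x := MonoidalClosed.uncurry (f ≫ doubleNegUnit B)
    set y := MonoidalClosed.uncurry (g ≫ doubleNegUnit B)
    haveI : IsIso x := CategoryTheory.to_initial_isIso x
    exact (IsInitial.ofIso initialIsInitial (asIso x).symm).hom_ext x y
  simpa using hcancel =≫ inv (doubleNegUnit B)
end

section
/- For coherence spaces A and B, the coherence space !(A & B) is isomorphic to !A ⊗ !B: finite cliques of A & B correspond bijectively to pairs of a finite clique of A and a finite clique of B, and this bijection preserves and reflects coherence. -/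
structure CoherenceSpace (α : Type*) where
  coh : α → α → Prop
  refl : ∀ x, coh x x
  symm : ∀ {x y}, coh x y → coh y x

def CoherenceSpace.IsClique {α : Type*} (A : CoherenceSpace α) (s : Set α) : Prop :=
  ∀ ⦃x⦄, x ∈ s → ∀ ⦃y⦄, y ∈ s → A.coh x y

/-- The additive conjunction `A & B`: disjoint union of the graphs with every token of
`A` coherent with every token of `B`. -/
def CoherenceSpace.with_ {α β : Type*} (A : CoherenceSpace α) (B : CoherenceSpace β) :
    CoherenceSpace (α ⊕ β) where
  coh x y :=
    match x, y with
    | .inl a, .inl a' => A.coh a a'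
    | .inr b, .inr b' => B.coh b b'
    | _, _ => True
  refl x := by cases x <;> simp [A.refl, B.refl]
  symm {x y} h := by
    cases x <;> cases y <;> simp_all <;> first | exact A.symm h | exact B.symm h

/-- The multiplicative conjunction `A ⊗ B`: componentwise coherence on `|A| × |B|`. -/
def CoherenceSpace.tens {α β : Type*} (A : CoherenceSpace α) (B : CoherenceSpace β) :
    CoherenceSpace (α × β) where
  coh p q := A.coh p.1 q.1 ∧ B.coh p.2 q.2
  refl p := ⟨A.refl _, B.refl _⟩
  symm h := ⟨A.symm h.1, B.symm h.2⟩

/-- The exponential `!A`: tokens are the finite cliques of `A`, two being coherent iff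
their union is a clique of `A`. -/
def CoherenceSpace.bang {α : Type*} (A : CoherenceSpace α) :
    CoherenceSpace {s : Set α // s.Finite ∧ A.IsClique s} where
  coh s t := A.IsClique (s.1 ∪ t.1)
  refl s := by simpa [Set.union_self] using s.2.2
  symm := fun {s t} h => by
    have h' : A.IsClique (↑s ∪ ↑t) := h
    rw [Set.union_comm] at h'
    exact h'

lemma clique_with_iff {α β : Type*} (A : CoherenceSpace α) (B : CoherenceSpace β)
    (s : Set (α ⊕ β)) :
    (A.with_ B).IsClique s ↔
      A.IsClique (Sum.inl ⁻¹' s) ∧ B.IsClique (Sum.inr ⁻¹' s) := by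
  constructor
  · intro h
    exact ⟨fun x hx y hy => h hx hy, fun x hx y hy => h hx hy⟩
  · rintro ⟨hA, hB⟩ x hx y hy
    cases x <;> cases y <;> simp [CoherenceSpace.with_]
    · exact hA hx hy
    · exact hB hx hy

/-- `!(A & B)` is isomorphic to `!A ⊗ !B`: finite cliques of `A & B` correspond
bijectively to pairs of a finite clique of `A` and a finite clique of `B`, and this
bijection preserves and reflects coherence. -/
theorem bang_with_iso_tens_bang_bang {α β : Type*}
    (A : CoherenceSpace α) (B : CoherenceSpace β) :
    ∃ e : {s : Set (α ⊕ β) // s.Finite ∧ (A.with_ B).IsClique s} ≃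
          {a : Set α // a.Finite ∧ A.IsClique a} × {b : Set β // b.Finite ∧ B.IsClique b},
      ∀ s t, (A.with_ B).bang.coh s t ↔ ((A.bang).tens (B.bang)).coh (e s) (e t) := by
  refine ⟨⟨fun s => (⟨Sum.inl ⁻¹' s.1, s.2.1.preimage Sum.inl_injective.injOn,
      ((clique_with_iff A B s.1).1 s.2.2).1⟩,
      ⟨Sum.inr ⁻¹' s.1, s.2.1.preimage Sum.inr_injective.injOn,
      ((clique_with_iff A B s.1).1 s.2.2).2⟩),
    fun p => ⟨Sum.inl '' p.1.1 ∪ Sum.inr '' p.2.1,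
      (p.1.2.1.image _).union (p.2.2.1.image _), ?_⟩, ?_, ?_⟩, ?_⟩
  · rw [clique_with_iff]
    constructor
    · intro x hx y hy
      simp at hx hy
      exact p.1.2.2 hx hy
    · intro x hx y hy
      simp at hx hy
      exact p.2.2.2 hx hy
  · rintro ⟨s, hs⟩
    ext x
    cases x <;> simp
  · rintro ⟨⟨a, ha⟩, ⟨b, hb⟩⟩
    simp
    constructor <;> · ext x; simp
  · intro s t
    show (A.with_ B).IsClique _ ↔ _
    rw [clique_with_iff]
    simp only [Set.preimage_union]
    rfl
end
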